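/- If a metrizable topological group G is topologically isomorphic to a subgroup of a separable Hausdorff topological group, then G is separable. -/

import Mathlib

open Topology Filter Set Pointwise

universe u v

/-- If a metrizable topological group `G` is topologically isomorphic to a
subgroup of a separable Hausdorff topological group `X` (i.e. there is a group homomorphism
`G →* X` which is a topological embedding), then `G` is separable. -/
theorem separable_of_metrizable_subgroup_of_separable {G : Type u}
    [Group G] [TopologicalSpace G] [IsTopologicalGroup G]
    [TopologicalSpace.MetrizableSpace G]
    {X : Type v} [Group X] [TopologicalSpace X] [IsTopologicalGroup X]
    [T2Space X] [TopologicalSpace.SeparableSpace X]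
    (f : G →* X) (hemb : Topology.IsEmbedding (⇑f)) :
    TopologicalSpace.SeparableSpace G := by
  classical
  obtain ⟨U, hU⟩ := (𝓝 (1 : G)).exists_antitone_basis
  -- For each n, find an open symmetric nbhd `W n` of 1 in X such that whenever
  -- `f g = v⁻¹ * w` with `v, w ∈ W n`, we get `g ∈ U n`.
  have key : ∀ n : ℕ, ∃ W : Set X, IsOpen W ∧ (1 : X) ∈ W ∧ (∀ x ∈ W, x⁻¹ ∈ W) ∧
      ∀ v ∈ W, ∀ w ∈ W, ∀ g : G, f g = v⁻¹ * w → g ∈ U n := by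
    intro n
    have hUn : U n ∈ 𝓝 (1 : G) := hU.mem n
    rw [hemb.toIsInducing.nhds_eq_comap, map_one] at hUn
    obtain ⟨O, hO, hOU⟩ := Filter.mem_comap.mp hUn
    obtain ⟨V, V_open, V_mem, hV⟩ := exists_open_nhds_one_mul_subset hO
    refine ⟨V ∩ V⁻¹, V_open.inter (V_open.preimage continuous_inv),
      ⟨V_mem, by simpa using V_mem⟩,
      fun x hx => ⟨hx.2, by simpa using hx.1⟩, fun v hv w hw g hg => ?_⟩
    apply hOU
    have : v⁻¹ * w ∈ O := hV (Set.mul_mem_mul hv.2 hw.1)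
    simpa [hg] using this
  choose W W_open W_one W_symm W_spec using key
  obtain ⟨s, s_count, s_dense⟩ := TopologicalSpace.exists_countable_dense X
  -- choice function: for each (n, d) pick g with f g ∈ d • W n if possible
  let c : ℕ → X → G := fun n d =>
    if h : ∃ g : G, f g ∈ d • W n then h.choose else 1
  refine ⟨⟨(fun p : ℕ × X => c p.1 p.2) '' (Set.univ ×ˢ s),
    (Set.countable_univ.prod s_count).image _, ?_⟩⟩
  rw [dense_iff_inter_open]
  rintro N N_open ⟨g₀, hg₀⟩
  -- find n with g₀ • U n ⊆ N
  have hM : (g₀ * ·) ⁻¹' N ∈ 𝓝 (1 : G) :=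
    (continuous_mul_left g₀).continuousAt.preimage_mem_nhds
      (by simpa using N_open.mem_nhds hg₀)
  obtain ⟨n, -, hn⟩ := hU.toHasBasis.mem_iff.mp hM
  -- find d ∈ s inside the open set f g₀ • W n
  obtain ⟨d, hdW, hds⟩ := s_dense.inter_open_nonempty (f g₀ • W n)
    ((W_open n).smul (f g₀)) ⟨f g₀, 1, W_one n, by simp⟩
  obtain ⟨w₁, hw₁, hd⟩ := hdW
  -- the choice for (n, d) exists, witnessed by g₀ itself
  have hEx : ∃ g : G, f g ∈ d • W n :=
    ⟨g₀, w₁⁻¹, W_symm n w₁ hw₁, by rw [← hd]; simp [smul_eq_mul, mul_assoc]⟩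
  obtain ⟨w₂, hw₂, hg₁⟩ : f (c n d) ∈ d • W n := by
    simp only [c, dif_pos hEx]
    exact hEx.choose_spec
  refine ⟨c n d, ?_, ⟨(n, d), ⟨Set.mem_univ _, hds⟩, rfl⟩⟩
  have heq : f (g₀⁻¹ * c n d) = (w₁⁻¹)⁻¹ * w₂ := by
    rw [map_mul, map_inv, ← hg₁, ← hd]
    simp [smul_eq_mul, mul_assoc]
  have := W_spec n w₁⁻¹ (W_symm n w₁ hw₁) w₂ hw₂ _ heq
  have := hn this
  simpa using this
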